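/- Hurwitz's theorem: for every irrational real number x there exist infinitely many rational numbers p/q (p ∈ ℤ, q ∈ ℕ₊, gcd(p,q) = 1) such that |x − p/q| < 1/(√5 · q²). -/

import Mathlib

noncomputable def cq (x : ℝ) : ℕ → ℝ
  | 0 => x
  | n + 1 => (Int.fract (cq x n))⁻¹

noncomputable def cfA (x : ℝ) (n : ℕ) : ℤ := ⌊cq x n⌋

noncomputable def cfP (x : ℝ) : ℕ → ℤ
  | 0 => 1
  | 1 => cfA x 0
  | n + 2 => cfA x (n + 1) * cfP x (n + 1) + cfP x n

noncomputable def cfQ (x : ℝ) : ℕ → ℤ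
  | 0 => 0
  | 1 => 1
  | n + 2 => cfA x (n + 1) * cfQ x (n + 1) + cfQ x n

variable {x : ℝ}

lemma cq_irrational (hx : Irrational x) : ∀ n, Irrational (cq x n) := by
  intro n
  induction n with
  | zero => exact hx
  | succ n ih =>
      show Irrational (Int.fract (cq x n))⁻¹
      exact (ih.sub_intCast _).inv

lemma fract_cq_pos (hx : Irrational x) (n : ℕ) : 0 < Int.fract (cq x n) :=
  lt_of_le_of_ne (Int.fract_nonneg _) (by
    intro h
    have h2 : cq x n = (⌊cq x n⌋ : ℝ) := by
      have h3 := Int.fract_add_floor (cq x n)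
      rw [← h] at h3
      linarith
    exact (cq_irrational hx n).ne_int _ h2)

lemma cq_gt_one (hx : Irrational x) (n : ℕ) : 1 < cq x (n + 1) :=
  one_lt_inv₀ (fract_cq_pos hx n) |>.mpr (Int.fract_lt_one _)

/-- key recursion for complete quotients -/
lemma cq_rec (hx : Irrational x) (n : ℕ) :
    cq x n = (cfA x n : ℝ) + (cq x (n + 1))⁻¹ := by
  have : cq x (n + 1) = (Int.fract (cq x n))⁻¹ := rfl
  rw [this, inv_inv, cfA, Int.fract]
  ring

lemma cfA_ge_one (hx : Irrational x) (n : ℕ) : 1 ≤ cfA x (n + 1) := by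
  have := cq_gt_one hx n
  have : (1 : ℤ) ≤ ⌊cq x (n+1)⌋ := by
    rw [Int.le_floor]; push_cast; linarith
  exact this

lemma cfQ_pos : ∀ n : ℕ, (hx : Irrational x) → 0 ≤ cfQ x n ∧ 1 ≤ cfQ x (n + 1) := by
  intro n
  induction n with
  | zero => intro _; exact ⟨le_refl 0, le_refl 1⟩
  | succ n ih =>
      intro hx
      obtain ⟨h0, h1⟩ := ih hx
      refine ⟨by linarith, ?_⟩
      show 1 ≤ cfA x (n + 1) * cfQ x (n + 1) + cfQ x n
      nlinarith [cfA_ge_one hx n]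

lemma cfQ_lt (hx : Irrational x) (n : ℕ) (hn : 1 ≤ n) :
    cfQ x (n + 1) < cfQ x (n + 2) := by
  rcases n with _ | m
  · omega
  have h0 := (cfQ_pos (m + 1) hx).2
  have h1 := (cfQ_pos m hx).2
  show cfQ x (m + 2) < cfA x (m + 2) * cfQ x (m + 2) + cfQ x (m + 1)
  nlinarith [cfA_ge_one hx (m + 1)]

lemma cfQ_strictmono (hx : Irrational x) : ∀ m n : ℕ, 1 ≤ m → m < n →
    cfQ x (m + 1) < cfQ x (n + 1) := by
  intro m n hm hmn
  induction n with
  | zero => omega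
  | succ n ih =>
      rcases Nat.lt_succ_iff_lt_or_eq.mp hmn with h | h
      · exact lt_trans (ih h) (cfQ_lt hx n (by omega))
      · subst h; exact cfQ_lt hx m hm

lemma cf_det (hx : Irrational x) : ∀ n : ℕ,
    cfP x (n + 1) * cfQ x n - cfP x n * cfQ x (n + 1) = (-1) ^ (n + 1) := by
  intro n
  induction n with
  | zero => simp [cfP, cfQ]
  | succ n ih =>
      show (cfA x (n+1) * cfP x (n+1) + cfP x n) * cfQ x (n+1)
          - cfP x (n+1) * (cfA x (n+1) * cfQ x (n+1) + cfQ x n) = (-1) ^ (n + 2)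
      have : (-1 : ℤ) ^ (n + 2) = -(-1) ^ (n + 1) := by ring
      rw [this, ← ih]; ring

/-- the fundamental identity relating x, complete quotients and convergents -/
lemma cf_key (hx : Irrational x) : ∀ n : ℕ,
    x * (cq x (n + 1) * (cfQ x (n + 1) : ℝ) + (cfQ x n : ℝ))
      = cq x (n + 1) * (cfP x (n + 1) : ℝ) + (cfP x n : ℝ) := by
  intro n
  induction n with
  | zero =>
      have h0 : cq x 0 = x := rfl
      have := cq_rec hx 0
      rw [h0] at this
      have hpos : 1 < cq x 1 := cq_gt_one hx 0
      show x * (cq x 1 * ((1 : ℤ) : ℝ) + ((0:ℤ) : ℝ)) = cq x 1 * ((cfA x 0 : ℤ) : ℝ) + ((1:ℤ) : ℝ)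
      push_cast
      have hne : cq x 1 ≠ 0 := by linarith
      field_simp at this ⊢
      nlinarith [this]
  | succ n ih =>
      have hrec := cq_rec hx (n + 1)
      have hpos : 1 < cq x (n + 2) := cq_gt_one hx (n + 1)
      have hne : cq x (n + 2) ≠ 0 := by linarith
      rw [hrec] at ih
      show x * (cq x (n+2) * ((cfA x (n+1) * cfQ x (n+1) + cfQ x n : ℤ) : ℝ) + (cfQ x (n+1) : ℝ))
        = cq x (n+2) * ((cfA x (n+1) * cfP x (n+1) + cfP x n : ℤ) : ℝ) + (cfP x (n+1) : ℝ)
      push_cast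
      push_cast at ih
      field_simp at ih
      nlinarith [ih]

noncomputable def cb (x : ℝ) (n : ℕ) : ℝ := (cfQ x n : ℝ) / (cfQ x (n + 1) : ℝ)

noncomputable def clam (x : ℝ) (n : ℕ) : ℝ := cq x (n + 1) + cb x n

lemma cfQR_pos (hx : Irrational x) (n : ℕ) : (0:ℝ) < (cfQ x (n+1) : ℝ) := by
  have := (cfQ_pos n hx).2
  have : (1:ℝ) ≤ (cfQ x (n+1) : ℝ) := by exact_mod_cast this
  linarith

lemma cb_pos (hx : Irrational x) (n : ℕ) : 0 < cb x (n + 1) :=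
  div_pos (cfQR_pos hx n) (cfQR_pos hx (n+1))

lemma cb_nonneg (hx : Irrational x) (n : ℕ) : 0 ≤ cb x n := by
  apply div_nonneg _ (cfQR_pos hx n).le
  have := (cfQ_pos n hx).1
  exact_mod_cast this

lemma cb_le_one (hx : Irrational x) (n : ℕ) : cb x n ≤ 1 := by
  rw [cb, div_le_one (cfQR_pos hx n)]
  rcases n with _ | m
  · norm_num [cfQ]
  · have h1 := (cfQ_pos m hx).2
    have h2 := (cfQ_pos m hx).1
    have hA := cfA_ge_one hx m
    have : cfQ x (m + 1) ≤ cfQ x (m + 2) := by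
      show cfQ x (m+1) ≤ cfA x (m + 1) * cfQ x (m + 1) + cfQ x m
      nlinarith
    exact_mod_cast this

lemma cb_inv (hx : Irrational x) (n : ℕ) :
    (cb x (n + 1))⁻¹ = (cfA x (n + 1) : ℝ) + cb x n := by
  have h1 := cfQR_pos hx n
  have h2 := cfQR_pos hx (n + 1)
  rw [cb, cb]
  rw [inv_div]
  have hrec : (cfQ x (n + 2) : ℝ) = (cfA x (n+1) : ℝ) * (cfQ x (n+1) : ℝ) + (cfQ x n : ℝ) := by
    have : cfQ x (n + 2) = cfA x (n + 1) * cfQ x (n + 1) + cfQ x n := rfl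
    exact_mod_cast this
  rw [hrec]
  field_simp

lemma clam_alt (hx : Irrational x) (n : ℕ) :
    clam x n = (cq x (n + 2))⁻¹ + (cb x (n + 1))⁻¹ := by
  rw [clam, cb_inv hx n, cq_rec hx (n + 1)]
  ring

lemma clam_pos (hx : Irrational x) (n : ℕ) : 1 < clam x n := by
  have := cq_gt_one hx n
  have := cb_nonneg hx n
  rw [clam]; linarith

lemma err_good_iff (hx : Irrational x) (n : ℕ) :
    |x - (cfP x (n+1) : ℝ) / (cfQ x (n+1) : ℝ)| < 1 / (Real.sqrt 5 * ((cfQ x (n+1):ℝ)) ^ 2)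
      ↔ Real.sqrt 5 < clam x n := by
  have hq := cfQR_pos hx n
  have hq0 : (0:ℝ) ≤ (cfQ x n : ℝ) := by exact_mod_cast (cfQ_pos n hx).1
  have hα := cq_gt_one hx n
  have hkey := cf_key hx n
  have hdet : ((cfP x (n+1) : ℝ) * (cfQ x n : ℝ) - (cfP x n : ℝ) * (cfQ x (n+1) : ℝ))
      = (-1 : ℝ) ^ (n + 1) := by exact_mod_cast congrArg (Int.cast : ℤ → ℝ) (cf_det hx n)
  set q : ℝ := (cfQ x (n+1) : ℝ)
  set q0 : ℝ := (cfQ x n : ℝ)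
  set p : ℝ := (cfP x (n+1) : ℝ)
  set p0 : ℝ := (cfP x n : ℝ)
  set α : ℝ := cq x (n+1)
  have hD : 0 < α * q + q0 := by nlinarith
  have hlam : clam x n = α + q0 / q := rfl
  have hql : q ^ 2 * clam x n = q * (α * q + q0) := by
    rw [hlam]; field_simp
  have hexp : (-1 : ℝ) ^ (n+1) = -(-1:ℝ)^n := by ring
  rw [hexp] at hdet
  have hqD : (0:ℝ) < q * (α * q + q0) := by positivity
  have heq' : (x - p / q) * (q * (α * q + q0)) = (-1:ℝ) ^ n := by
    have hc : p / q * q = p := div_mul_cancel₀ p hq.ne'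
    have expand : (x - p/q) * (q*(α*q+q0))
        = x*(α*q+q0)*q - (p/q*q)*(α*q+q0) := by ring
    rw [expand, hc]
    linear_combination q * hkey - hdet
  have heq : x - p / q = (-1 : ℝ) ^ n / (q * (α * q + q0)) := by
    rw [eq_div_iff hqD.ne']
    exact heq'
  have habs : |x - p / q| = 1 / (q ^ 2 * clam x n) := by
    rw [heq, hql, abs_div, abs_pow, abs_neg, abs_one, one_pow,
      abs_of_pos (by positivity)]
  rw [habs]
  have hlampos : 0 < clam x n := by linarith [clam_pos hx n]
  have hs5 : 0 < Real.sqrt 5 := Real.sqrt_pos.mpr (by norm_num)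
  rw [div_lt_div_iff₀ (by positivity) (by positivity)]
  constructor
  · intro h; nlinarith [mul_pos hq hq]
  · intro h; nlinarith [mul_pos hq hq]

lemma sqrt5_sq : Real.sqrt 5 ^ 2 = 5 := Real.sq_sqrt (by norm_num)

lemma sqrt5_gt_two : 2 < Real.sqrt 5 := by
  nlinarith [sqrt5_sq, Real.sqrt_nonneg 5]

/-- two consecutive failures force the ratio to be at least the golden ratio minus one -/
lemma pair_lemma (hx : Irrational x) (k : ℕ)
    (h1 : clam x k ≤ Real.sqrt 5) (h2 : clam x (k + 1) ≤ Real.sqrt 5) :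
    (Real.sqrt 5 - 1) / 2 ≤ cb x (k + 1) := by
  set a : ℝ := cq x (k + 2) with ha_def
  set β : ℝ := cb x (k + 1) with hb_def
  have ha : 1 < a := cq_gt_one hx (k + 1)
  have hb0 : 0 < β := cb_pos hx k
  have hb1 : β ≤ 1 := cb_le_one hx (k + 1)
  have hsum : a⁻¹ + β⁻¹ ≤ Real.sqrt 5 := by
    rw [← clam_alt hx k]; exact h1
  have h2' : a + β ≤ Real.sqrt 5 := h2
  have h3 : β + a ≤ Real.sqrt 5 * (a * β) := by
    have hab : (0:ℝ) < a * β := by positivity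
    calc β + a = (a⁻¹ + β⁻¹) * (a * β) := by field_simp
      _ ≤ Real.sqrt 5 * (a * β) := mul_le_mul_of_nonneg_right hsum hab.le
  -- first: √5 β > 1
  have h4 : 1 < Real.sqrt 5 * β := by
    by_contra h
    push_neg at h
    nlinarith [mul_le_mul_of_nonneg_left h (le_of_lt (lt_trans one_pos ha))]
  -- a ≤ √5 - β, multiply by √5 β - 1 > 0
  have h5 : a * (Real.sqrt 5 * β - 1) ≤ (Real.sqrt 5 - β) * (Real.sqrt 5 * β - 1) :=
    mul_le_mul_of_nonneg_right (by linarith) (by linarith)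
  -- conclude β² - √5 β + 1 ≤ 0
  have h6 : β ^ 2 - Real.sqrt 5 * β + 1 ≤ 0 := by
    nlinarith [h3, h5, sqrt5_sq, sqrt5_gt_two]
  have h7 : β < (Real.sqrt 5 + 1) / 2 := by linarith [sqrt5_gt_two]
  nlinarith [h6, sqrt5_sq, h7]

lemma cb_rat (n : ℕ) : ∃ r : ℚ, cb x n = (r : ℝ) := by
  exact ⟨(cfQ x n : ℚ) / (cfQ x (n+1) : ℚ), by rw [cb]; push_cast; ring⟩

lemma triple_lemma (hx : Irrational x) (n : ℕ) :
    Real.sqrt 5 < clam x n ∨ Real.sqrt 5 < clam x (n + 1) ∨ Real.sqrt 5 < clam x (n + 2) := by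
  by_contra h
  push_neg at h
  obtain ⟨h1, h2, h3⟩ := h
  have hb1 : (Real.sqrt 5 - 1) / 2 ≤ cb x (n + 1) := pair_lemma hx n h1 h2
  have hb2 : (Real.sqrt 5 - 1) / 2 ≤ cb x (n + 2) := pair_lemma hx (n + 1) h2 h3
  have hAR : (1:ℝ) ≤ (cfA x (n + 2) : ℝ) := by exact_mod_cast cfA_ge_one hx (n + 1)
  have hinv : (cb x (n + 2))⁻¹ = (cfA x (n + 2) : ℝ) + cb x (n + 1) := cb_inv hx (n + 1)
  have hb2pos : 0 < cb x (n + 2) := cb_pos hx (n + 1)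
  have hup : (cb x (n + 2))⁻¹ ≥ 1 + (Real.sqrt 5 - 1) / 2 := by
    rw [hinv]; linarith
  have hle : cb x (n + 2) ≤ (Real.sqrt 5 - 1) / 2 := by
    have hpos : (0:ℝ) < 1 + (Real.sqrt 5 - 1) / 2 := by nlinarith [sqrt5_gt_two]
    have h9 := (inv_le_inv₀ (by positivity) hpos).mpr hup
    rw [inv_inv] at h9
    calc cb x (n + 2) ≤ (1 + (Real.sqrt 5 - 1) / 2)⁻¹ := h9
      _ = (Real.sqrt 5 - 1) / 2 := by
          rw [inv_eq_iff_eq_inv, eq_comm, inv_eq_one_div, div_eq_iff (by nlinarith [sqrt5_gt_two])]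
          nlinarith [sqrt5_sq]
  have heq : cb x (n + 2) = (Real.sqrt 5 - 1) / 2 := le_antisymm hle hb2
  obtain ⟨r, hr⟩ := cb_rat (x := x) (n + 2)
  have hirr : Irrational (Real.sqrt 5) := by
    have h5 : Real.sqrt 5 = Real.sqrt (5:ℕ) := by norm_num
    rw [h5]
    exact (by norm_num : Nat.Prime 5).irrational_sqrt
  apply hirr
  exact ⟨2 * r + 1, by push_cast; rw [← hr, heq]; ring⟩

/-- Hurwitz's theorem: for every irrational real `x` there are infinitely many
rationals `p/q` in lowest terms with `|x - p/q| < 1/(√5 q²)`. -/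
theorem hurwitz_approximation (x : ℝ) (hx : Irrational x) :
    {pq : ℤ × ℕ | 0 < pq.2 ∧ Nat.gcd pq.1.natAbs pq.2 = 1 ∧
      |x - (pq.1 : ℝ) / (pq.2 : ℝ)| < 1 / (Real.sqrt 5 * (pq.2 : ℝ) ^ 2)}.Infinite := by
  set T : Set ℕ := {n | 1 ≤ n ∧ Real.sqrt 5 < clam x n} with hTdef
  have hTinf : T.Infinite := by
    apply Set.infinite_of_not_bddAbove
    rintro ⟨m, hm⟩
    have h3 := triple_lemma hx (m + 1)
    rcases h3 with h | h | h
    · have := hm (show m + 1 ∈ T from ⟨by omega, h⟩); omega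
    · have := hm (show m + 2 ∈ T from ⟨by omega, h⟩); omega
    · have := hm (show m + 3 ∈ T from ⟨by omega, h⟩); omega
  have hmem : ∀ n ∈ T, (cfP x (n + 1), (cfQ x (n + 1)).toNat) ∈
      {pq : ℤ × ℕ | 0 < pq.2 ∧ Nat.gcd pq.1.natAbs pq.2 = 1 ∧
        |x - (pq.1 : ℝ) / (pq.2 : ℝ)| < 1 / (Real.sqrt 5 * (pq.2 : ℝ) ^ 2)} := by
    intro n hn
    have hq1 : 1 ≤ cfQ x (n + 1) := (cfQ_pos n hx).2
    have hcast : (((cfQ x (n + 1)).toNat : ℕ) : ℝ) = ((cfQ x (n + 1) : ℤ) : ℝ) := by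
      have h := Int.toNat_of_nonneg (show (0:ℤ) ≤ cfQ x (n + 1) by omega)
      exact_mod_cast congrArg (Int.cast : ℤ → ℝ) h
    refine ⟨by simp; omega, ?_, ?_⟩
    · have htn : (cfQ x (n + 1)).toNat = (cfQ x (n + 1)).natAbs := by omega
      show Nat.gcd (cfP x (n + 1)).natAbs (cfQ x (n + 1)).toNat = 1
      rw [htn]
      show Int.gcd (cfP x (n + 1)) (cfQ x (n + 1)) = 1
      rw [← Int.isCoprime_iff_gcd_eq_one]
      rcases Nat.even_or_odd (n + 1) with he | ho
      · have h := cf_det hx n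
        rw [he.neg_one_pow] at h
        exact ⟨cfQ x n, -cfP x n, by linear_combination h⟩
      · have h := cf_det hx n
        rw [ho.neg_one_pow] at h
        exact ⟨-cfQ x n, cfP x n, by linear_combination -h⟩
    · show |x - (cfP x (n+1) : ℝ) / (((cfQ x (n+1)).toNat : ℕ) : ℝ)|
        < 1 / (Real.sqrt 5 * (((cfQ x (n+1)).toNat : ℕ) : ℝ) ^ 2)
      rw [hcast]
      exact (err_good_iff hx n).mpr hn.2
  have hinj : Set.InjOn (fun n => (cfP x (n + 1), (cfQ x (n + 1)).toNat)) T := by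
    intro m hm n hn hfe
    have h2 : (cfQ x (m + 1)).toNat = (cfQ x (n + 1)).toNat := congrArg Prod.snd hfe
    have hqm : 1 ≤ cfQ x (m + 1) := (cfQ_pos m hx).2
    have hqn : 1 ≤ cfQ x (n + 1) := (cfQ_pos n hx).2
    have heq : cfQ x (m + 1) = cfQ x (n + 1) := by omega
    rcases lt_trichotomy m n with h | h | h
    · exact absurd heq (ne_of_lt (cfQ_strictmono hx m n hm.1 h))
    · exact h
    · exact absurd heq.symm (ne_of_lt (cfQ_strictmono hx n m hn.1 h))
  have himg := hTinf.image hinj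
  apply himg.mono
  rintro _ ⟨n, hn, rfl⟩
  exact hmem n hn
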